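/- For every real c > 1, the function (x,y) ↦ 4 / ((1+x²+y²)·((c+1)(x²+y²)+c−1)) is Lebesgue integrable on ℝ² and ∫_{ℝ²} 4 / ((1+x²+y²)((c+1)(x²+y²)+c−1)) dx dy = 2π · ln((c+1)/(c−1)). (This is the symplectic area V(c) of (S², π_c) for |c| > 1.) -/

import Mathlib

open MeasureTheory Set Real Filter

private lemma radial_aux (c : ℝ) (hc : 1 < c) :
    IntegrableOn (fun r : ℝ => 4 * r / ((1 + r ^ 2) * ((c + 1) * r ^ 2 + c - 1))) (Ioi 0) ∧
    ∫ r in Ioi (0:ℝ), 4 * r / ((1 + r ^ 2) * ((c + 1) * r ^ 2 + c - 1))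
      = Real.log ((c + 1) / (c - 1)) := by
  have hc1 : (0:ℝ) < c - 1 := by linarith
  have hc2 : (0:ℝ) < c + 1 := by linarith
  set F : ℝ → ℝ := fun r => Real.log ((c + 1) * r ^ 2 + c - 1) - Real.log (1 + r ^ 2) with hF
  have hA : ∀ r : ℝ, (0:ℝ) < (c + 1) * r ^ 2 + c - 1 := by
    intro r; nlinarith [sq_nonneg r]
  have hB : ∀ r : ℝ, (0:ℝ) < 1 + r ^ 2 := by intro r; positivity
  have hderiv : ∀ r : ℝ, HasDerivAt F
      (4 * r / ((1 + r ^ 2) * ((c + 1) * r ^ 2 + c - 1))) r := by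
    intro r
    have d1 : HasDerivAt (fun r : ℝ => (c + 1) * r ^ 2 + c - 1) ((c + 1) * (2 * r)) r := by
      have := (((hasDerivAt_pow 2 r).const_mul (c + 1)).add_const c).sub_const 1
      simpa using this
    have d2 : HasDerivAt (fun r : ℝ => 1 + r ^ 2) (2 * r) r := by
      have := (hasDerivAt_pow 2 r).const_add 1
      simpa using this
    have H := (d1.log (hA r).ne').sub (d2.log (hB r).ne')
    have e : 4 * r / ((1 + r ^ 2) * ((c + 1) * r ^ 2 + c - 1)) =
        (c + 1) * (2 * r) / ((c + 1) * r ^ 2 + c - 1) - 2 * r / (1 + r ^ 2) := by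
      rw [div_sub_div _ _ (hA r).ne' (hB r).ne',
        div_eq_div_iff (mul_pos (hB r) (hA r)).ne' (mul_pos (hA r) (hB r)).ne']
      ring
    rw [e]
    exact H
  have hlim : Tendsto F atTop (nhds (Real.log (c + 1))) := by
    have hEq : F = fun r : ℝ => Real.log ((c + 1) - 2 / (1 + r ^ 2)) := by
      funext r
      show Real.log ((c + 1) * r ^ 2 + c - 1) - Real.log (1 + r ^ 2) = _
      rw [← Real.log_div (hA r).ne' (hB r).ne']
      congr 1
      field_simp
      ring
    rw [hEq]
    have h2 : Tendsto (fun r : ℝ => 1 + r ^ 2) atTop atTop := by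
      apply tendsto_atTop_add_const_left
      exact tendsto_pow_atTop two_ne_zero
    have h0 : Tendsto (fun r : ℝ => 2 / (1 + r ^ 2)) atTop (nhds 0) :=
      Tendsto.div_atTop tendsto_const_nhds h2
    have h3 : Tendsto (fun r : ℝ => (c + 1) - 2 / (1 + r ^ 2)) atTop (nhds (c + 1)) := by
      simpa using tendsto_const_nhds.sub h0
    exact ((Real.continuousAt_log hc2.ne').tendsto.comp h3)
  have hpos : ∀ r ∈ Ioi (0:ℝ), 0 ≤ 4 * r / ((1 + r ^ 2) * ((c + 1) * r ^ 2 + c - 1)) := by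
    intro r hr
    have := hA r; have := hB r
    have hr0 : 0 < r := hr
    positivity
  have hF0 : F 0 = Real.log (c - 1) := by simp [hF]
  constructor
  · exact integrableOn_Ioi_deriv_of_nonneg' (fun r _ => hderiv r) hpos hlim
  · rw [integral_Ioi_of_hasDerivAt_of_nonneg' (fun r _ => hderiv r) hpos hlim, hF0,
      Real.log_div hc2.ne' hc1.ne']

/-- For `c > 1`, the symplectic area of `(S², π_c)` in the stereographic chart:
the density `4 / ((1+x²+y²)((c+1)(x²+y²)+c−1))` is integrable on `ℝ²` with
integral `2π ln((c+1)/(c−1))`. -/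
theorem symplectic_area_of_pi_c (c : ℝ) (hc : 1 < c) :
    Integrable (fun p : ℝ × ℝ =>
      4 / ((1 + p.1 ^ 2 + p.2 ^ 2) * ((c + 1) * (p.1 ^ 2 + p.2 ^ 2) + c - 1))) ∧
    ∫ p : ℝ × ℝ,
      4 / ((1 + p.1 ^ 2 + p.2 ^ 2) * ((c + 1) * (p.1 ^ 2 + p.2 ^ 2) + c - 1))
      = 2 * Real.pi * Real.log ((c + 1) / (c - 1)) := by
  have hc1 : (0:ℝ) < c - 1 := by linarith
  have hc2 : (0:ℝ) < c + 1 := by linarith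
  set f : ℝ × ℝ → ℝ := fun p =>
    4 / ((1 + p.1 ^ 2 + p.2 ^ 2) * ((c + 1) * (p.1 ^ 2 + p.2 ^ 2) + c - 1)) with hf
  have hden : ∀ p : ℝ × ℝ, (0:ℝ) <
      (1 + p.1 ^ 2 + p.2 ^ 2) * ((c + 1) * (p.1 ^ 2 + p.2 ^ 2) + c - 1) := by
    intro p
    have h1 : (0:ℝ) < 1 + p.1 ^ 2 + p.2 ^ 2 := by positivity
    have h2 : (0:ℝ) < (c + 1) * (p.1 ^ 2 + p.2 ^ 2) + c - 1 := by
      nlinarith [sq_nonneg p.1, sq_nonneg p.2]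
    positivity
  have hint : Integrable f := by
    have hmeas : AEStronglyMeasurable f volume := by
      apply Continuous.aestronglyMeasurable
      exact continuous_const.div (by fun_prop) (fun p => (hden p).ne')
    have hnr : ((Module.finrank ℝ (ℝ × ℝ) : ℝ)) < (4:ℝ) := by
      simp [Module.finrank_self]; norm_num
    refine (((integrable_one_add_norm (E := ℝ × ℝ) (μ := volume) hnr)).const_mul
      (16 / (c - 1))).mono' hmeas (Filter.Eventually.of_forall fun p => ?_)
    have hns : ‖p‖ ^ 2 ≤ p.1 ^ 2 + p.2 ^ 2 := by
      rw [Prod.norm_def]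
      rcases max_cases ‖p.1‖ ‖p.2‖ with ⟨h, _⟩ | ⟨h, _⟩ <;> rw [h] <;>
        simp only [Real.norm_eq_abs, sq_abs] <;> nlinarith [sq_nonneg p.1, sq_nonneg p.2]
    have hn0 : (0:ℝ) ≤ ‖p‖ := norm_nonneg p
    have key : (1 + ‖p‖) ^ (4:ℕ) ≤ 4 * ((1 + p.1 ^ 2 + p.2 ^ 2) *
        ((1 + p.1 ^ 2 + p.2 ^ 2))) := by
      nlinarith [sq_nonneg (1 - ‖p‖), sq_nonneg p.1, sq_nonneg p.2]
    have hd := hden p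
    have h1 : (0:ℝ) < 1 + p.1 ^ 2 + p.2 ^ 2 := by positivity
    have h2 : (c - 1) * (1 + p.1 ^ 2 + p.2 ^ 2) ≤
        (c + 1) * (p.1 ^ 2 + p.2 ^ 2) + c - 1 := by nlinarith [sq_nonneg p.1, sq_nonneg p.2]
    have hrpow : ((1 + ‖p‖) ^ (-(4:ℝ))) = ((1 + ‖p‖) ^ (4:ℕ))⁻¹ := by
      rw [Real.rpow_neg (by linarith), ← Real.rpow_natCast (1 + ‖p‖) 4]
      norm_num
    rw [Real.norm_eq_abs, abs_of_nonneg (by positivity), hf, hrpow]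
    rw [show (16 / (c - 1) * (((1 + ‖p‖) ^ (4:ℕ))⁻¹) : ℝ)
        = 16 / ((c - 1) * (1 + ‖p‖) ^ (4:ℕ)) by
      field_simp]
    rw [div_le_div_iff₀ hd (by positivity)]
    nlinarith [mul_le_mul_of_nonneg_left key hc1.le,
      mul_le_mul_of_nonneg_left h2 h1.le, hd, h1, hc1]
  refine ⟨hint, ?_⟩
  rw [← integral_comp_polarCoord_symm f]
  have key : ∀ p : ℝ × ℝ, p.1 • f (polarCoord.symm p) =
      (fun r => 4 * r / ((1 + r ^ 2) * ((c + 1) * r ^ 2 + c - 1))) p.1 *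
      (fun _ : ℝ => (1:ℝ)) p.2 := by
    intro p
    have hsymm : polarCoord.symm p = (p.1 * Real.cos p.2, p.1 * Real.sin p.2) := rfl
    have hsq : (p.1 * Real.cos p.2) ^ 2 + (p.1 * Real.sin p.2) ^ 2 = p.1 ^ 2 := by
      have := Real.sin_sq_add_cos_sq p.2
      nlinarith [this]
    simp only [hf, hsymm, smul_eq_mul]
    rw [show (1:ℝ) + (p.1 * Real.cos p.2) ^ 2 + (p.1 * Real.sin p.2) ^ 2
        = 1 + p.1 ^ 2 by rw [add_assoc, hsq], hsq]
    ring
  rw [integral_congr_ae (Filter.Eventually.of_forall key)]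
  have htarget : polarCoord.target = Ioi (0:ℝ) ×ˢ Ioo (-π) π := rfl
  rw [htarget, Measure.volume_eq_prod,
    setIntegral_prod_mul (fun r : ℝ => 4 * r / ((1 + r ^ 2) * ((c + 1) * r ^ 2 + c - 1)))
      (fun _ : ℝ => (1:ℝ)) (Ioi 0) (Ioo (-π) π)]
  rw [(radial_aux c hc).2]
  simp only [integral_const, MeasurableSet.univ, Measure.restrict_apply, univ_inter,
    Real.volume_Ioo, smul_eq_mul, mul_one]
  rw [measureReal_def, Measure.restrict_apply MeasurableSet.univ, univ_inter, Real.volume_Ioo,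
    ENNReal.toReal_ofReal (by linarith [Real.pi_pos] : (0:ℝ) ≤ π - -π)]
  ring
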